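/- Let α > 0 and β > 0, let h > 0, t ∈ ℝ, and let f : ℝ → ℝ be a bounded function. Then the semigroup property Δ_h^α (Δ_h^β f)(t) = Δ_h^{α+β} f(t) holds, where Δ_h^γ f(t) = Σ_{k=0}^∞ (-1)^k binom(γ,k) f(t-kh); all the series involved converge absolutely. -/

import Mathlib

open Real

/-- Generalized binomial coefficient `binom(a, k) = a(a-1)⋯(a-k+1)/k!`. -/
noncomputable def genBinom (a : ℝ) (k : ℕ) : ℝ :=
  (∏ j ∈ Finset.range k, (a - (j : ℝ))) / (Nat.factorial k : ℝ)

lemma descPoch_smeval (a : ℝ) (k : ℕ) :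
    (descPochhammer ℤ k).smeval a = ∏ j ∈ Finset.range k, (a - (j : ℝ)) := by
  induction k with
  | zero => simp [descPochhammer_zero, Polynomial.smeval_one]
  | succ n ih =>
    rw [descPochhammer_succ_right, Polynomial.smeval_mul, ih, Finset.prod_range_succ]
    congr 1
    rw [Polynomial.smeval_sub, Polynomial.smeval_X, Polynomial.smeval_natCast]
    simp

lemma genBinom_eq_choose (a : ℝ) (k : ℕ) : genBinom a k = Ring.choose a k := by
  have h := Ring.descPochhammer_eq_factorial_smul_choose (R := ℝ) a k
  rw [descPoch_smeval] at h
  rw [genBinom, h, nsmul_eq_mul]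
  field_simp [Nat.factorial_ne_zero]

lemma genBinom_vandermonde (a b : ℝ) (n : ℕ) :
    ∑ kl ∈ Finset.HasAntidiagonal.antidiagonal n, genBinom a kl.1 * genBinom b kl.2 = genBinom (a + b) n := by
  simp only [genBinom_eq_choose]
  exact (Ring.add_choose_eq n (Commute.all a b)).symm

lemma genBinom_succ (a : ℝ) (k : ℕ) :
    genBinom a (k + 1) = genBinom a k * (a - k) / (k + 1) := by
  rw [genBinom, genBinom, Finset.prod_range_succ, Nat.factorial_succ]
  push_cast
  rw [div_mul_eq_mul_div, div_div, mul_comm ((k:ℝ) + 1)]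

lemma summable_abs_genBinom {γ : ℝ} (hγ : 0 < γ) :
    Summable (fun k : ℕ => |genBinom γ k|) := by
  set b : ℕ → ℝ := fun k => |genBinom γ k| with hb
  set k0 : ℕ := ⌈γ⌉₊ with hk0
  have hγk0 : γ ≤ k0 := Nat.le_ceil γ
  -- recurrence on absolute values beyond k0
  have hrec : ∀ k, k0 ≤ k → ((k : ℝ) + 1) * b (k + 1) = ((k : ℝ) - γ) * b k := by
    intro k hk
    have hkγ : γ ≤ (k : ℝ) := hγk0.trans (by exact_mod_cast hk)
    have : b (k + 1) = b k * ((k : ℝ) - γ) / ((k : ℝ) + 1) := by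
      rw [hb]
      simp only
      rw [genBinom_succ, abs_div, abs_mul]
      rw [abs_of_nonneg (by positivity : (0:ℝ) ≤ (k:ℝ) + 1)]
      rw [abs_sub_comm, abs_of_nonneg (by linarith : (0:ℝ) ≤ (k:ℝ) - γ)]
    rw [this]
    field_simp
  -- telescoping: partial sums over Ico k0 n
  have htel : ∀ n, k0 ≤ n → ∑ k ∈ Finset.Ico k0 n, γ * b k = k0 * b k0 - n * b n := by
    intro n hn
    induction n, hn using Nat.le_induction with
    | base => simp
    | succ n hn ih =>
      rw [Finset.sum_Ico_succ_top hn, ih]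
      have := hrec n hn
      push_cast
      linarith
  have hbnn : ∀ k, 0 ≤ b k := fun k => abs_nonneg _
  apply summable_of_sum_range_le (c := (∑ k ∈ Finset.range k0, b k) + k0 * b k0 / γ) hbnn
  intro n
  rcases le_or_gt n k0 with hn | hn
  · have h1 : ∑ k ∈ Finset.range n, b k ≤ ∑ k ∈ Finset.range k0, b k :=
      Finset.sum_le_sum_of_subset_of_nonneg (Finset.range_subset_range.mpr hn) (fun i _ _ => hbnn i)
    have h2 : 0 ≤ (k0 : ℝ) * b k0 / γ := by positivity
    linarith
  · rw [← Finset.sum_range_add_sum_Ico b hn.le]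
    have h3 : ∑ k ∈ Finset.Ico k0 n, b k ≤ k0 * b k0 / γ := by
      have h4 : γ * ∑ k ∈ Finset.Ico k0 n, b k = k0 * b k0 - n * b n := by
        rw [Finset.mul_sum]; exact htel n hn.le
      have h5 : (0:ℝ) ≤ n * b n := by positivity
      rw [div_eq_inv_mul]
      have h6 : ∑ k ∈ Finset.Ico k0 n, b k = γ⁻¹ * (γ * ∑ k ∈ Finset.Ico k0 n, b k) := by
        rw [← mul_assoc, inv_mul_cancel₀ hγ.ne', one_mul]
      rw [h6, h4]
      have : (0:ℝ) ≤ γ⁻¹ := by positivity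
      nlinarith
    linarith


set_option maxHeartbeats 1000000 in
/-- Semigroup property of fractional differences: for bounded `f` and `α, β > 0`,
`Δ_h^α (Δ_h^β f)(t) = Δ_h^{α+β} f(t)`, with all series converging absolutely. -/
theorem fractional_difference_semigroup
    (α β : ℝ) (hα : 0 < α) (hβ : 0 < β) (h : ℝ) (hh : 0 < h) (t : ℝ)
    (f : ℝ → ℝ) (hf_bdd : ∃ M : ℝ, ∀ x, |f x| ≤ M) :
    (∀ s : ℝ, Summable (fun k : ℕ => |(-1 : ℝ) ^ k * genBinom β k * f (s - (k : ℝ) * h)|)) ∧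
    Summable (fun k : ℕ => |(-1 : ℝ) ^ k * genBinom α k *
      (∑' j : ℕ, (-1 : ℝ) ^ j * genBinom β j * f (t - (k : ℝ) * h - (j : ℝ) * h))|) ∧
    Summable (fun k : ℕ => |(-1 : ℝ) ^ k * genBinom (α + β) k * f (t - (k : ℝ) * h)|) ∧
    (∑' k : ℕ, (-1 : ℝ) ^ k * genBinom α k *
        (∑' j : ℕ, (-1 : ℝ) ^ j * genBinom β j * f (t - (k : ℝ) * h - (j : ℝ) * h))
      = ∑' k : ℕ, (-1 : ℝ) ^ k * genBinom (α + β) k * f (t - (k : ℝ) * h)) := by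
  obtain ⟨M, hM⟩ := hf_bdd
  have hM0 : 0 ≤ M := (abs_nonneg _).trans (hM t)
  have hSα := summable_abs_genBinom hα
  have hSβ := summable_abs_genBinom hβ
  have hSαβ := summable_abs_genBinom (add_pos hα hβ)
  -- generic claim for any γ with summable abs genBinom
  have key : ∀ (γ : ℝ), Summable (fun k : ℕ => |genBinom γ k|) → ∀ s : ℝ,
      Summable (fun k : ℕ => |(-1 : ℝ) ^ k * genBinom γ k * f (s - (k : ℝ) * h)|) := by
    intro γ hS s
    apply Summable.of_nonneg_of_le (fun k => abs_nonneg _) ?_ (hS.mul_right M)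
    intro k
    rw [abs_mul, abs_mul, abs_pow, abs_neg, abs_one, one_pow, one_mul]
    exact mul_le_mul_of_nonneg_left (hM _) (abs_nonneg _)
  have claim1 := key β hSβ
  have claim3 := key (α + β) hSαβ
  -- inner series summable (without abs)
  have hinner : ∀ s : ℝ,
      Summable (fun j : ℕ => (-1 : ℝ) ^ j * genBinom β j * f (s - (j : ℝ) * h)) :=
    fun s => (claim1 s).of_abs
  -- bound on inner tsum
  set C : ℝ := ∑' j : ℕ, |genBinom β j| with hC
  have hC0 : 0 ≤ C := tsum_nonneg (fun j => abs_nonneg _)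
  have hinner_bd : ∀ s : ℝ,
      |∑' j : ℕ, (-1 : ℝ) ^ j * genBinom β j * f (s - (j : ℝ) * h)| ≤ C * M := by
    intro s
    calc |∑' j : ℕ, (-1 : ℝ) ^ j * genBinom β j * f (s - (j : ℝ) * h)|
        ≤ ∑' j : ℕ, |(-1 : ℝ) ^ j * genBinom β j * f (s - (j : ℝ) * h)| := by
          simpa only [Real.norm_eq_abs] using norm_tsum_le_tsum_norm (f := fun j : ℕ =>
            (-1 : ℝ) ^ j * genBinom β j * f (s - (j : ℝ) * h))
            (by simpa only [Real.norm_eq_abs] using claim1 s)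
      _ ≤ ∑' j : ℕ, |genBinom β j| * M := by
          apply Summable.tsum_le_tsum _ (claim1 s) (hSβ.mul_right M)
          intro j
          rw [abs_mul, abs_mul, abs_pow, abs_neg, abs_one, one_pow, one_mul]
          exact mul_le_mul_of_nonneg_left (hM _) (abs_nonneg _)
      _ = C * M := by rw [tsum_mul_right]
  have claim2 : Summable (fun k : ℕ => |(-1 : ℝ) ^ k * genBinom α k *
      (∑' j : ℕ, (-1 : ℝ) ^ j * genBinom β j * f (t - (k : ℝ) * h - (j : ℝ) * h))|) := by
    apply Summable.of_nonneg_of_le (fun k => abs_nonneg _) ?_ (hSα.mul_right (C * M))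
    intro k
    rw [abs_mul, abs_mul, abs_pow, abs_neg, abs_one, one_pow, one_mul]
    refine mul_le_mul_of_nonneg_left ?_ (abs_nonneg _)
    have := hinner_bd (t - (k : ℝ) * h)
    simpa [sub_sub] using this
  refine ⟨claim1, claim2, claim3 t, ?_⟩
  -- main equality
  set g : ℕ × ℕ → ℝ := fun p => (-1 : ℝ) ^ p.1 * genBinom α p.1 *
    ((-1 : ℝ) ^ p.2 * genBinom β p.2 * f (t - (p.1 : ℝ) * h - (p.2 : ℝ) * h)) with hg
  have hprod : Summable (fun p : ℕ × ℕ => |genBinom α p.1| * |genBinom β p.2|) :=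
    hSα.mul_of_nonneg hSβ (fun k => abs_nonneg _) (fun k => abs_nonneg _)
  have hgabs : Summable (fun p : ℕ × ℕ => |g p|) := by
    apply Summable.of_nonneg_of_le (fun p => abs_nonneg _) ?_ (hprod.mul_right M)
    intro p
    rw [hg]
    simp only [abs_mul, abs_pow, abs_neg, abs_one, one_pow, one_mul, mul_assoc]
    exact mul_le_mul_of_nonneg_left
      (mul_le_mul_of_nonneg_left (hM _) (abs_nonneg _)) (abs_nonneg _)
  have hgsum : Summable g := hgabs.of_abs
  have hfib : ∀ k : ℕ, Summable (fun j : ℕ => g (k, j)) := by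
    intro k
    simp only [hg]
    apply Summable.mul_left
    have := hinner (t - (k : ℝ) * h)
    simpa [sub_sub] using this
  have step1 : (∑' k : ℕ, (-1 : ℝ) ^ k * genBinom α k *
        (∑' j : ℕ, (-1 : ℝ) ^ j * genBinom β j * f (t - (k : ℝ) * h - (j : ℝ) * h)))
      = ∑' p : ℕ × ℕ, g p := by
    rw [Summable.tsum_prod' hgsum hfib]
    refine tsum_congr (fun k => ?_)
    simp only [hg]
    exact (tsum_mul_left).symm
  have step2 : (∑' p : ℕ × ℕ, g p)
      = ∑' n : ℕ, ∑ kl ∈ Finset.HasAntidiagonal.antidiagonal n, g kl := by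
    rw [← Finset.HasAntidiagonal.sigmaAntidiagonalEquivProd.tsum_eq g]
    conv_rhs => congr; ext; rw [← Finset.sum_finset_coe, ← tsum_fintype (L := SummationFilter.unconditional _)]
    exact Summable.tsum_sigma' (fun n => (hasSum_fintype _).summable)
      (Finset.HasAntidiagonal.sigmaAntidiagonalEquivProd.summable_iff.mpr hgsum)
  have step3 : ∀ n : ℕ, ∑ kl ∈ Finset.HasAntidiagonal.antidiagonal n, g kl
      = (-1 : ℝ) ^ n * genBinom (α + β) n * f (t - (n : ℝ) * h) := by
    intro n
    have hterm : ∀ kl ∈ Finset.HasAntidiagonal.antidiagonal n,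
        g kl = genBinom α kl.1 * genBinom β kl.2 * ((-1 : ℝ) ^ n * f (t - (n : ℝ) * h)) := by
      intro kl hkl
      have hkln : kl.1 + kl.2 = n := Finset.HasAntidiagonal.mem_antidiagonal.mp hkl
      have harg : t - (kl.1 : ℝ) * h - (kl.2 : ℝ) * h = t - (n : ℝ) * h := by
        rw [← hkln]; push_cast; ring
      rw [hg]
      simp only
      rw [harg, ← hkln, pow_add]
      ring
    rw [Finset.sum_congr rfl hterm, ← Finset.sum_mul, genBinom_vandermonde]
    ring
  rw [step1, step2]
  exact tsum_congr step3
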